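/- Let D be a finite DAG with vertices partitioned into sources S, internal vertices I, and sinks T. If the internal vertices are eliminated in forward topological order, the total cost equals the sum over all v ∈ I of |S_v| · outdeg_D(v), where S_v ⊆ S is the set of sources from which v is reachable in D and outdeg_D(v) is the out-degree of v in the original graph D. -/

import Mathlib

variable {V : Type*} [DecidableEq V] [Fintype V]

/-- In-neighborhood of `v` in the edge set `E`. -/
def inN (E : Finset (V × V)) (v : V) : Finset V :=
  (E.filter fun p => p.2 = v).image Prod.fst

/-- Out-neighborhood of `v` in the edge set `E`. -/
def outN (E : Finset (V × V)) (v : V) : Finset V :=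
  (E.filter fun p => p.1 = v).image Prod.snd

/-- Elimination of vertex `v`: delete `v` and add an edge from every in-neighbor
to every out-neighbor of `v` (if not already present). -/
def elimv (E : Finset (V × V)) (v : V) : Finset (V × V) :=
  (E ∪ (inN E v) ×ˢ (outN E v)).filter fun p => p.1 ≠ v ∧ p.2 ≠ v

/-- Eliminate a sequence of vertices, in order. -/
def elimSeq (E : Finset (V × V)) (σ : List V) : Finset (V × V) :=
  σ.foldl elimv E

/-- Markowitz degree of `v`: in-degree times out-degree. -/
def mark (E : Finset (V × V)) (v : V) : ℕ :=
  (inN E v).card * (outN E v).card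

/-- Cost of an elimination sequence: sum of the Markowitz degrees at the
time of each elimination. -/
def cost (E : Finset (V × V)) : List V → ℕ
  | [] => 0
  | v :: σ => mark E v + cost (elimv E v) σ

/-- The directed graph with edge set `E` is acyclic. -/
def Acyclic (E : Finset (V × V)) : Prop :=
  ∀ v : V, ¬ Relation.TransGen (fun a b => (a, b) ∈ E) v v

/-- `E` is an acyclic digraph whose vertices are partitioned into sources `S`
(no in-edges), internal vertices `I`, and sinks `T` (no out-edges). -/
def IsDAGPartition (E : Finset (V × V)) (S I T : Finset V) : Prop :=
  Acyclic E ∧ Disjoint S I ∧ Disjoint S T ∧ Disjoint I T ∧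
    S ∪ I ∪ T = Finset.univ ∧ (∀ s ∈ S, inN E s = ∅) ∧ (∀ t ∈ T, outN E t = ∅)

/-- There is a directed path from `i` to `j` all of whose internal vertices
lie in `X` (the single-edge path has no internal vertices). -/
def PathThrough (E : Finset (V × V)) (X : Finset V) (i j : V) : Prop :=
  ∃ l : List V, (∀ v ∈ l, v ∈ X) ∧ List.Chain' (fun a b => (a, b) ∈ E) (i :: (l ++ [j]))

lemma mem_inN {E : Finset (V × V)} {a v : V} : a ∈ inN E v ↔ (a, v) ∈ E := by
  simp only [inN, Finset.mem_image, Finset.mem_filter]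
  constructor
  · rintro ⟨⟨x, y⟩, ⟨hx, rfl⟩, rfl⟩; exact hx
  · intro h; exact ⟨(a, v), ⟨h, rfl⟩, rfl⟩

lemma mem_outN {E : Finset (V × V)} {b v : V} : b ∈ outN E v ↔ (v, b) ∈ E := by
  simp only [outN, Finset.mem_image, Finset.mem_filter]
  constructor
  · rintro ⟨⟨x, y⟩, ⟨hx, rfl⟩, rfl⟩; exact hx
  · intro h; exact ⟨(v, b), ⟨h, rfl⟩, rfl⟩

lemma mem_elimv {E : Finset (V × V)} {u a b : V} :
    (a, b) ∈ elimv E u ↔ a ≠ u ∧ b ≠ u ∧ ((a, b) ∈ E ∨ ((a, u) ∈ E ∧ (u, b) ∈ E)) := by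
  simp only [elimv, Finset.mem_filter, Finset.mem_union, Finset.mem_product, mem_inN, mem_outN]
  tauto

lemma elimSeq_concat (E : Finset (V × V)) (σ : List V) (u : V) :
    elimSeq E (σ ++ [u]) = elimv (elimSeq E σ) u := by
  simp [elimSeq, List.foldl_append]

set_option linter.unusedSectionVars false

section Main

variable {E : Finset (V × V)} {S I T : Finset V} {σ σ₁ σ₂ : List V} {u : V}

lemma not_source_of_edge (hD : IsDAGPartition E S I T) {a b : V} (h : (a, b) ∈ E) : b ∉ S := by
  intro hb
  have := hD.2.2.2.2.2.1 b hb
  rw [Finset.eq_empty_iff_forall_notMem] at this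
  exact this a (mem_inN.mpr h)

lemma not_sink_of_edge (hD : IsDAGPartition E S I T) {a b : V} (h : (a, b) ∈ E) : a ∉ T := by
  intro ha
  have := hD.2.2.2.2.2.2 a ha
  rw [Finset.eq_empty_iff_forall_notMem] at this
  exact this b (mem_outN.mpr h)

lemma mem_I_of_edges (hD : IsDAGPartition E S I T) {p x q : V}
    (h1 : (p, x) ∈ E) (h2 : (x, q) ∈ E) : x ∈ I := by
  have hx : x ∈ S ∪ I ∪ T := by rw [hD.2.2.2.2.1]; exact Finset.mem_univ x
  rcases Finset.mem_union.1 hx with hx | hx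
  · rcases Finset.mem_union.1 hx with hx | hx
    · exact absurd hx (not_source_of_edge hD h1)
    · exact hx
  · exact absurd hx (not_sink_of_edge hD h2)

/-- every middle vertex of a chain is internal -/

lemma chain_internal (hD : IsDAGPartition E S I T) :
    ∀ (l : List V) (s w : V), List.Chain' (fun a b => (a, b) ∈ E) (s :: (l ++ [w])) →
      ∀ x ∈ l, x ∈ I := by
  intro l
  induction l with
  | nil => intro s w _ x hx; simp at hx
  | cons y l' ih =>
    intro s w hc x hx
    rw [List.cons_append, List.Chain', List.isChain_cons_cons] at hc
    rcases List.mem_cons.1 hx with hxy | hx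
    · subst hxy
      obtain ⟨z, hz⟩ : ∃ z, (l' ++ [w]).head? = some z := by
        cases l' <;> simp
      have hyz : (x, z) ∈ E := (List.isChain_cons.1 hc.2).1 z hz
      exact mem_I_of_edges hD hc.1 hyz
    · exact ih y w hc.2 x hx

lemma idx_u (hσ : σ.Nodup) (hsplit : σ = σ₁ ++ u :: σ₂) : σ.idxOf u = σ₁.length := by
  subst hsplit
  have hu : u ∉ σ₁ := fun h =>
    (List.disjoint_of_nodup_append hσ) h (List.mem_cons_self)
  rw [List.idxOf_append_of_notMem hu, List.idxOf_cons_self]; omega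

lemma idx_mem_σ₁ (hsplit : σ = σ₁ ++ u :: σ₂) {y : V} (hy : y ∈ σ₁) :
    σ.idxOf y < σ₁.length := by
  subst hsplit
  rw [List.idxOf_append_of_mem hy]
  exact List.idxOf_lt_length_iff.2 hy

lemma mem_σ₁_of_idx_lt (hsplit : σ = σ₁ ++ u :: σ₂) {a : V} (ha : a ∈ σ)
    (h : σ.idxOf a < σ₁.length) : a ∈ σ₁ := by
  have hlen : σ.idxOf a < σ.length := List.idxOf_lt_length_iff.2 ha
  have hget : σ.get ⟨σ.idxOf a, hlen⟩ = a := List.idxOf_get hlen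
  rw [List.get_eq_getElem] at hget
  have : σ[σ.idxOf a] = σ₁[σ.idxOf a] := by
    subst hsplit
    exact List.getElem_append_left h
  rw [this] at hget
  exact hget ▸ List.getElem_mem _

end Main

section Main2

variable {E : Finset (V × V)} {S I T : Finset V} {σ σ₁ σ₂ : List V} {u : V}

lemma no_middle_u (hD : IsDAGPartition E S I T) (hσ : σ.Nodup) (hσI : σ.toFinset = I)
    (hfwd : ∀ a b : V, (a, b) ∈ E → a ∈ I → b ∈ I → σ.idxOf a < σ.idxOf b)
    (hsplit : σ = σ₁ ++ u :: σ₂) {s w : V} {l p q : List V}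
    (hc : List.Chain' (fun a b => (a, b) ∈ E) (s :: (l ++ [w])))
    (hl : ∀ v ∈ l, v ∈ σ₁.toFinset ∪ {u}) (hlpq : l = p ++ u :: q) : q = [] := by
  cases q with
  | nil => rfl
  | cons y q' =>
    exfalso
    have hsuf : (u :: y :: (q' ++ [w])) <:+ (s :: (l ++ [w])) := ⟨s :: p, by simp [hlpq]⟩
    have hc2 := hc.suffix hsuf
    have huy : (u, y) ∈ E := (List.isChain_cons_cons.1 hc2).1
    have hyI : y ∈ I := chain_internal hD l s w hc y (by simp [hlpq])
    have huI : u ∈ I := by rw [← hσI]; simp [hsplit]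
    have hy' := hl y (by simp [hlpq])
    rcases Finset.mem_union.1 hy' with hy1 | hy1
    · have h1 := hfwd u y huy huI hyI
      have h2 := idx_mem_σ₁ hsplit (List.mem_toFinset.1 hy1)
      have h3 := idx_u hσ hsplit
      omega
    · have : y = u := by simpa using hy1
      subst this
      exact hD.1 y (Relation.TransGen.single huy)

end Main2

section Main3

variable {E : Finset (V × V)} {S I T : Finset V} {σ σ₁ σ₂ : List V} {u : V}

lemma toFinset_concat : (σ₁ ++ [u]).toFinset = σ₁.toFinset ∪ {u} := by
  simp

lemma pathThrough_concat (hD : IsDAGPartition E S I T) (hσ : σ.Nodup) (hσI : σ.toFinset = I)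
    (hfwd : ∀ a b : V, (a, b) ∈ E → a ∈ I → b ∈ I → σ.idxOf a < σ.idxOf b)
    (hsplit : σ = σ₁ ++ u :: σ₂) {s w : V} :
    PathThrough E (σ₁ ++ [u]).toFinset s w ↔
      PathThrough E σ₁.toFinset s w ∨ (PathThrough E σ₁.toFinset s u ∧ (u, w) ∈ E) := by
  constructor
  · rintro ⟨l, hl, hc⟩
    rw [toFinset_concat] at hl
    by_cases hu : u ∈ l
    · obtain ⟨p, q, rfl⟩ := List.append_of_mem hu
      have hq : q = [] := no_middle_u hD hσ hσI hfwd hsplit hc hl rfl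
      subst hq
      have hup : u ∉ p := by
        intro hup
        obtain ⟨p₁, p₂, rfl⟩ := List.append_of_mem hup
        have : p₂ ++ [u] = [] := by
          refine no_middle_u hD hσ hσI hfwd hsplit (p := p₁) (q := p₂ ++ [u]) hc hl ?_
          simp
        simp at this
      have hp : ∀ v ∈ p, v ∈ σ₁.toFinset := by
        intro v hv
        rcases Finset.mem_union.1 (hl v (by simp [hv])) with h | h
        · exact h
        · simp only [Finset.mem_singleton] at h
          exact absurd (h ▸ hv) hup
      have hsplit2 : s :: ((p ++ u :: []) ++ [w]) = ((s :: p) ++ [u]) ++ [w] := by simp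
      rw [hsplit2] at hc
      have hc3 := List.isChain_append.1 hc
      have huw : (u, w) ∈ E := by
        refine hc3.2.2 u ?_ w ?_
        · rw [show s :: p ++ [u] = (s :: p) ++ [u] from rfl, List.getLast?_concat]
          rfl
        · simp
      refine Or.inr ⟨⟨p, hp, ?_⟩, huw⟩
      have : s :: (p ++ [u]) = (s :: p) ++ [u] := by simp
      rw [this]
      exact hc3.1
    · refine Or.inl ⟨l, ?_, hc⟩
      intro v hv
      rcases Finset.mem_union.1 (hl v hv) with h | h
      · exact h
      · simp only [Finset.mem_singleton] at h
        exact absurd (h ▸ hv) hu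
  · rintro (⟨l, hl, hc⟩ | ⟨⟨l, hl, hc⟩, huw⟩)
    · exact ⟨l, fun v hv => by rw [toFinset_concat]; exact Finset.mem_union_left _ (hl v hv), hc⟩
    · refine ⟨l ++ [u], ?_, ?_⟩
      · intro v hv
        rw [toFinset_concat]
        rcases List.mem_append.1 hv with h | h
        · exact Finset.mem_union_left _ (hl v h)
        · simp at h
          simp [h]
      · have : s :: ((l ++ [u]) ++ [w]) = (s :: (l ++ [u])) ++ [w] := by simp
        rw [this]
        refine List.isChain_append.2 ⟨hc, List.isChain_singleton _, ?_⟩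
        intro x hx y hy
        simp only [List.head?_cons, Option.mem_def, Option.some.injEq] at hy
        have hx' : u = x := by
          have : s :: (l ++ [u]) = (s :: l) ++ [u] := by simp
          rw [this, List.getLast?_concat] at hx
          simpa using hx
        rw [← hx', ← hy]
        exact huw

end Main3

section Main4

variable {E : Finset (V × V)} {S I T : Finset V} {σ σ₁ σ₂ : List V} {u : V}

lemma chain_idx_lt (hD : IsDAGPartition E S I T)
    (hfwd : ∀ a b : V, (a, b) ∈ E → a ∈ I → b ∈ I → σ.idxOf a < σ.idxOf b) :
    ∀ (c : List V) (x : V), x ∈ I → (∀ y ∈ c, y ∈ I) → u ∈ I →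
      List.Chain' (fun a b => (a, b) ∈ E) (x :: (c ++ [u])) →
      σ.idxOf x < σ.idxOf u := by
  intro c
  induction c with
  | nil =>
    intro x hx _ hu hc
    have : (x, u) ∈ E := (List.isChain_cons_cons.1 hc).1
    exact hfwd x u this hx hu
  | cons y c' ih =>
    intro x hx hcI hu hc
    rw [List.cons_append, List.Chain', List.isChain_cons_cons] at hc
    have h1 := hfwd x y hc.1 hx (hcI y (List.mem_cons_self))
    have h2 := ih y (hcI y (List.mem_cons_self))
      (fun z hz => hcI z (List.mem_cons_of_mem _ hz)) hu hc.2
    omega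

lemma reflTransGen_iff_pathThrough (hD : IsDAGPartition E S I T) (hσ : σ.Nodup)
    (hσI : σ.toFinset = I)
    (hfwd : ∀ a b : V, (a, b) ∈ E → a ∈ I → b ∈ I → σ.idxOf a < σ.idxOf b)
    (hsplit : σ = σ₁ ++ u :: σ₂) {s : V} (hs : s ∈ S) :
    Relation.ReflTransGen (fun a b => (a, b) ∈ E) s u ↔ PathThrough E σ₁.toFinset s u := by
  have huI : u ∈ I := by rw [← hσI]; simp [hsplit]
  have hsu : s ≠ u := fun h => Finset.disjoint_left.1 hD.2.1 hs (h ▸ huI)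
  constructor
  · intro h
    obtain ⟨l, hchain, hlast⟩ := List.exists_isChain_cons_of_relationReflTransGen h
    rcases List.eq_nil_or_concat l with rfl | ⟨l', x, rfl⟩
    · simp at hlast
      exact absurd hlast hsu
    · rw [List.concat_eq_append] at hchain
      have hx : x = u := by
        rw [← hlast]
        exact (List.getLast_concat' (s :: l')).symm
      subst hx
      have hchain' : List.Chain' (fun a b => (a, b) ∈ E) (s :: (l' ++ [x])) := hchain
      have hIl : ∀ y ∈ l', y ∈ I := chain_internal hD l' s x hchain'
      refine ⟨l', ?_, hchain'⟩
      intro y hy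
      obtain ⟨p, q, rfl⟩ := List.append_of_mem hy
      have hsuf : (y :: (q ++ [x])) <:+ (s :: ((p ++ y :: q) ++ [x])) := ⟨s :: p, by simp⟩
      have hcy := hchain'.suffix hsuf
      have hidx : σ.idxOf y < σ.idxOf x :=
        chain_idx_lt hD hfwd q y (hIl y hy) (fun z hz => hIl z (by simp [hz])) huI hcy
      rw [List.mem_toFinset]
      refine mem_σ₁_of_idx_lt hsplit ?_ ?_
      · rw [← List.mem_toFinset, hσI]
        exact hIl y hy
      · rwa [idx_u hσ hsplit] at hidx
  · rintro ⟨l, hl, hc⟩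
    refine List.relationReflTransGen_of_exists_isChain_cons (l ++ [u]) hc ?_
    exact List.getLast_concat (l := s :: l)

end Main4

noncomputable def reachSet (E : Finset (V × V)) (S X : Finset V) (w : V) : Finset V :=
  @Finset.filter _ (fun s => PathThrough E X s w) (Classical.decPred _) S

lemma mem_reachSet {E : Finset (V × V)} {S X : Finset V} {w s : V} :
    s ∈ reachSet E S X w ↔ s ∈ S ∧ PathThrough E X s w :=
  @Finset.mem_filter _ _ (Classical.decPred _) _ _

def ElimInv (E : Finset (V × V)) (S : Finset V) (σ₁ : List V) (E₁ : Finset (V × V)) : Prop :=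
  ∀ w, w ∉ S → w ∉ σ₁ →
    outN E₁ w = outN E w ∧
    inN E₁ w = (inN E w \ σ₁.toFinset) ∪ reachSet E S σ₁.toFinset w

lemma pathThrough_empty {E : Finset (V × V)} {s w : V} :
    PathThrough E (∅ : Finset V) s w ↔ (s, w) ∈ E := by
  constructor
  · rintro ⟨l, hl, hc⟩
    cases l with
    | nil => simpa using (List.isChain_cons_cons.1 hc).1
    | cons y l' => exact absurd (hl y (List.mem_cons_self)) (Finset.notMem_empty _)
  · intro h
    exact ⟨[], by simp, by simpa [List.Chain'] using h⟩

lemma ElimInv_nil {E : Finset (V × V)} {S : Finset V} : ElimInv E S [] E := by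
  intro w _ _
  refine ⟨rfl, ?_⟩
  ext a
  simp only [List.toFinset_nil, Finset.sdiff_empty, Finset.mem_union, mem_reachSet,
    pathThrough_empty, mem_inN]
  constructor
  · intro h; exact Or.inl h
  · rintro (h | ⟨_, h⟩) <;> exact h

section Main5

variable {E : Finset (V × V)} {S I T : Finset V} {σ σ₁ σ₂ : List V} {u : V}

lemma u_not_mem_sigma1 (hσ : σ.Nodup) (hsplit : σ = σ₁ ++ u :: σ₂) : u ∉ σ₁ := by
  subst hsplit
  exact fun h => (List.disjoint_of_nodup_append hσ) h (List.mem_cons_self)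

lemma u_mem_I (hσI : σ.toFinset = I) (hsplit : σ = σ₁ ++ u :: σ₂) : u ∈ I := by
  rw [← hσI]; simp [hsplit]

lemma no_edge_to_u (hD : IsDAGPartition E S I T) (hσ : σ.Nodup) (hσI : σ.toFinset = I)
    (hfwd : ∀ a b : V, (a, b) ∈ E → a ∈ I → b ∈ I → σ.idxOf a < σ.idxOf b)
    (hsplit : σ = σ₁ ++ u :: σ₂) {b : V} (hbS : b ∉ S) (hb1 : b ∉ σ₁) :
    (b, u) ∉ E := by
  intro hbu
  have hbT : b ∉ T := not_sink_of_edge hD hbu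
  have hbI : b ∈ I := by
    have : b ∈ S ∪ I ∪ T := by rw [hD.2.2.2.2.1]; exact Finset.mem_univ b
    rcases Finset.mem_union.1 this with h | h
    · rcases Finset.mem_union.1 h with h | h
      · exact absurd h hbS
      · exact h
    · exact absurd h hbT
  have h1 := hfwd b u hbu hbI (u_mem_I hσI hsplit)
  rw [idx_u hσ hsplit] at h1
  exact hb1 (mem_σ₁_of_idx_lt hsplit (by rw [← List.mem_toFinset, hσI]; exact hbI) h1)

/-- Sources with a direct edge into `u` are absorbed into the reach set. -/

lemma inN_sub (hD : IsDAGPartition E S I T) (hσ : σ.Nodup) (hσI : σ.toFinset = I)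
    (hfwd : ∀ a b : V, (a, b) ∈ E → a ∈ I → b ∈ I → σ.idxOf a < σ.idxOf b)
    (hsplit : σ = σ₁ ++ u :: σ₂) :
    inN E u \ σ₁.toFinset ⊆ reachSet E S σ₁.toFinset u := by
  intro a ha
  rw [Finset.mem_sdiff, List.mem_toFinset, mem_inN] at ha
  have haS : a ∈ S := by
    by_contra haS
    exact no_edge_to_u hD hσ hσI hfwd hsplit haS ha.2 ha.1
  exact mem_reachSet.2 ⟨haS, ⟨[], by simp, by simpa [List.Chain'] using ha.1⟩⟩

set_option maxHeartbeats 1000000 in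

lemma ElimInv_step (hD : IsDAGPartition E S I T) (hσ : σ.Nodup) (hσI : σ.toFinset = I)
    (hfwd : ∀ a b : V, (a, b) ∈ E → a ∈ I → b ∈ I → σ.idxOf a < σ.idxOf b)
    (hsplit : σ = σ₁ ++ u :: σ₂) {E₁ : Finset (V × V)}
    (hInv : ElimInv E S σ₁ E₁) : ElimInv E S (σ₁ ++ [u]) (elimv E₁ u) := by
  have huσ₁ : u ∉ σ₁ := u_not_mem_sigma1 hσ hsplit
  have huI : u ∈ I := u_mem_I hσI hsplit
  have huS : u ∉ S := fun h => Finset.disjoint_left.1 hD.2.1 h huI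
  obtain ⟨hOutu, hInu⟩ := hInv u huS huσ₁
  have hAu : inN E₁ u = reachSet E S σ₁.toFinset u := by
    rw [hInu]
    rw [Finset.union_eq_right.2 (inN_sub hD hσ hσI hfwd hsplit)]
  have hAuS : ∀ a, a ∈ inN E₁ u → a ∈ S := by
    intro a ha
    rw [hAu] at ha
    exact (mem_reachSet.1 ha).1
  intro w hwS hw
  have hwσ₁ : w ∉ σ₁ := fun h => hw (List.mem_append_left _ h)
  have hwu : w ≠ u := fun h => hw (by simp [h])
  obtain ⟨hOutw, hInw⟩ := hInv w hwS hwσ₁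
  constructor
  · -- outN preserved
    ext b
    rw [mem_outN, mem_elimv]
    constructor
    · rintro ⟨_, hbu, h | ⟨hwu', _⟩⟩
      · rw [← mem_outN, hOutw, mem_outN] at h
        exact mem_outN.2 h
      · exact absurd (hAuS w (mem_inN.2 hwu')) hwS
    · intro h
      rw [mem_outN] at h
      have hbu : b ≠ u := by
        rintro rfl
        exact no_edge_to_u hD hσ hσI hfwd hsplit hwS hwσ₁ h
      exact ⟨hwu, hbu, Or.inl (by rw [← mem_outN, hOutw, mem_outN]; exact h)⟩
  · -- inN formula
    ext a
    rw [mem_inN, mem_elimv]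
    have e1 : (a, w) ∈ E₁ ↔ (a ∈ inN E w ∧ a ∉ σ₁.toFinset) ∨
        (a ∈ S ∧ PathThrough E σ₁.toFinset a w) := by
      rw [← mem_inN, hInw]
      simp only [Finset.mem_union, Finset.mem_sdiff, mem_reachSet]
    have e2 : (a, u) ∈ E₁ ↔ a ∈ S ∧ PathThrough E σ₁.toFinset a u := by
      rw [← mem_inN, hAu, mem_reachSet]
    have e3 : (u, w) ∈ E₁ ↔ (u, w) ∈ E := by
      rw [← mem_outN, hOutu, mem_outN]
    have e4 : a ∈ S → a ≠ u := fun h₁ h₂ =>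
      Finset.disjoint_left.1 hD.2.1 h₁ (h₂ ▸ huI)
    simp only [Finset.mem_union, Finset.mem_sdiff, mem_reachSet, e1, e2, e3,
      pathThrough_concat hD hσ hσI hfwd hsplit, List.mem_toFinset, List.mem_append,
      List.mem_singleton]
    constructor
    · rintro ⟨hau, -, (⟨h1, h2⟩ | ⟨h1, h2⟩) | ⟨⟨h1, h2⟩, h3⟩⟩
      · exact Or.inl ⟨h1, by push_neg; exact ⟨h2, hau⟩⟩
      · exact Or.inr ⟨h1, Or.inl h2⟩
      · exact Or.inr ⟨h1, Or.inr ⟨h2, h3⟩⟩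
    · rintro (⟨h1, h2⟩ | ⟨h1, h2⟩)
      · push_neg at h2
        exact ⟨h2.2, hwu, Or.inl (Or.inl ⟨h1, h2.1⟩)⟩
      · rcases h2 with h2 | ⟨h2, h3⟩
        · exact ⟨e4 h1, hwu, Or.inl (Or.inr ⟨h1, h2⟩)⟩
        · exact ⟨e4 h1, hwu, Or.inr ⟨⟨h1, h2⟩, h3⟩⟩

end Main5

section Main6

variable {E : Finset (V × V)} {S I T : Finset V} {σ : List V}

lemma cost_main (hD : IsDAGPartition E S I T) (hσ : σ.Nodup) (hσI : σ.toFinset = I)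
    (hfwd : ∀ a b : V, (a, b) ∈ E → a ∈ I → b ∈ I → σ.idxOf a < σ.idxOf b) :
    ∀ (σ₂ σ₁ : List V), σ = σ₁ ++ σ₂ → ElimInv E S σ₁ (elimSeq E σ₁) →
      cost (elimSeq E σ₁) σ₂ =
        ∑ v ∈ σ₂.toFinset,
          {s : V | s ∈ S ∧ Relation.ReflTransGen (fun a b => (a, b) ∈ E) s v}.ncard *
            (outN E v).card := by
  intro σ₂
  induction σ₂ with
  | nil => intro σ₁ _ _; simp [cost]
  | cons u σ₂' ih =>
    intro σ₁ hsplit hInv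
    have huσ₁ : u ∉ σ₁ := u_not_mem_sigma1 hσ hsplit
    have huI : u ∈ I := u_mem_I hσI hsplit
    have huS : u ∉ S := fun h => Finset.disjoint_left.1 hD.2.1 h huI
    obtain ⟨hOutu, hInu⟩ := hInv u huS huσ₁
    have hAu : inN (elimSeq E σ₁) u = reachSet E S σ₁.toFinset u := by
      rw [hInu, Finset.union_eq_right.2 (inN_sub hD hσ hσI hfwd hsplit)]
    have hset : {s : V | s ∈ S ∧ Relation.ReflTransGen (fun a b => (a, b) ∈ E) s u}
        = ↑(reachSet E S σ₁.toFinset u) := by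
      ext s
      simp only [Set.mem_setOf_eq, Finset.mem_coe, mem_reachSet]
      constructor
      · rintro ⟨h1, h2⟩
        exact ⟨h1, (reflTransGen_iff_pathThrough hD hσ hσI hfwd hsplit h1).1 h2⟩
      · rintro ⟨h1, h2⟩
        exact ⟨h1, (reflTransGen_iff_pathThrough hD hσ hσI hfwd hsplit h1).2 h2⟩
    have hmark : mark (elimSeq E σ₁) u =
        {s : V | s ∈ S ∧ Relation.ReflTransGen (fun a b => (a, b) ∈ E) s u}.ncard *
          (outN E u).card := by
      rw [mark, hAu, hOutu, hset, Set.ncard_coe_finset]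
    have hrec : cost (elimSeq E σ₁) (u :: σ₂') =
        mark (elimSeq E σ₁) u + cost (elimv (elimSeq E σ₁) u) σ₂' := rfl
    have hInv' : ElimInv E S (σ₁ ++ [u]) (elimSeq E (σ₁ ++ [u])) := by
      rw [elimSeq_concat]
      exact ElimInv_step hD hσ hσI hfwd hsplit hInv
    have hu2 : u ∉ σ₂' := by
      have : (u :: σ₂').Nodup := by
        rw [hsplit] at hσ
        exact hσ.of_append_right
      exact (List.nodup_cons.1 this).1
    rw [hrec, hmark, ← elimSeq_concat,
      ih (σ₁ ++ [u]) (by rw [hsplit]; simp) hInv',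
      List.toFinset_cons, Finset.sum_insert (by simpa using hu2)]

end Main6

/-- the cost of forward topological elimination equals
`∑_{v ∈ I} |S_v| · outdeg_D(v)`, where `S_v` is the set of sources from which
`v` is reachable in `D`. -/
theorem cost_forward_eq_sum (E : Finset (V × V)) (S I T : Finset V)
    (hD : IsDAGPartition E S I T)
    (σ : List V) (hσ : σ.Nodup) (hσI : σ.toFinset = I)
    (hfwd : ∀ a b : V, (a, b) ∈ E → a ∈ I → b ∈ I → σ.idxOf a < σ.idxOf b) :
    cost E σ =
      ∑ v ∈ I,
        {s : V | s ∈ S ∧ Relation.ReflTransGen (fun a b => (a, b) ∈ E) s v}.ncard *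
          (outN E v).card := by
  have := cost_main hD hσ hσI hfwd σ [] rfl ElimInv_nil
  rw [hσI] at this
  exact this
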